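/- For every graph G = (V,E) with at least one edge, cutwidth(G) ≤ pathwidth(G') ≤ 2·cutwidth(G), where G' is the graph with vertex set {v_u : {u,v} ∈ E} (one vertex for each incidence of a vertex v with an edge {u,v}) and edges {u_v, v_u} for each edge {u,v} ∈ E, together with edges {v_u, v_w} for all distinct neighbours u, w of each vertex v. -/

import Mathlib

noncomputable section

attribute [local instance] Classical.propDecidable

/-- `B 0, B 1, ..., B m` is a path decomposition of the graph `G`: every edge is
covered by some bag, and the bags containing any fixed vertex form a nonempty
contiguous interval of indices. -/
def IsPathDecomp {W : Type*} (G : SimpleGraph W) (m : ℕ) (B : ℕ → Finset W) : Prop :=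
  (∀ u v, G.Adj u v → ∃ t ≤ m, u ∈ B t ∧ v ∈ B t) ∧
  (∀ v : W, ∃ i j, i ≤ j ∧ j ≤ m ∧ ∀ t, v ∈ B t ↔ (i ≤ t ∧ t ≤ j))

/-- The pathwidth of a graph: the minimum, over path decompositions, of the
maximum bag size minus one. -/
def pathwidth {W : Type*} (G : SimpleGraph W) : ℕ :=
  sInf {w | ∃ m B, IsPathDecomp G m B ∧ ∀ t, (B t).card ≤ w + 1}

variable {V : Type*} [DecidableEq V] [Fintype V]

/-- The number of edges of `G` crossing the cut `(S, Sᶜ)`, counted via their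
orientation from `S` to `Sᶜ`. -/
def cutSizeSG (G : SimpleGraph V) (S : Finset V) : ℕ :=
  (Finset.univ.filter (fun p : V × V => G.Adj p.1 p.2 ∧ p.1 ∈ S ∧ p.2 ∉ S)).card

/-- The cutwidth of the linear arrangement `L`: the maximum number of edges
crossing any prefix cut of `L`. -/
def cwVal (G : SimpleGraph V) (L : List V) : ℕ :=
  Finset.sup (Finset.range (L.length + 1)) (fun i => cutSizeSG G (L.take i).toFinset)

/-- The cutwidth of `G`: the minimum cutwidth over all linear arrangements of the
vertices of `G`. -/
def cutwidthSG (G : SimpleGraph V) : ℕ :=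
  sInf {n | ∃ L : List V, L.Nodup ∧ (∀ v, v ∈ L) ∧ cwVal G L = n}

/-- The incidence-split graph `G'` of `G`: one vertex `v_u = (v, u)` for each
incidence of a vertex `v` with an edge `{u, v}` of `G`; edges `{u_v, v_u}` for
every edge `{u, v}` of `G`, plus a clique on `{v_u : u ∼ v}` for every vertex `v`. -/
def splitGraph (G : SimpleGraph V) : SimpleGraph {p : V × V // G.Adj p.1 p.2} :=
  SimpleGraph.fromRel (fun a b =>
    (a.val.1 = b.val.2 ∧ a.val.2 = b.val.1) ∨ a.val.1 = b.val.1)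

-- ### helpers

lemma mem_take_iff_indexOf (L : List V) (v : V) (hv : v ∈ L) (t : ℕ) :
    v ∈ L.take t ↔ L.idxOf v < t := by
  induction L generalizing t with
  | nil => simp at hv
  | cons a L ih =>
    cases t with
    | zero => simp
    | succ t =>
      by_cases hva : v = a
      · subst hva; simp [List.idxOf_cons_self]
      · have hv' : v ∈ L := by
          rcases List.mem_cons.mp hv with h1 | h1
          · exact absurd h1 hva
          · exact h1
        simp only [List.take_succ_cons, List.mem_cons,
          List.idxOf_cons_ne _ (by exact fun he => hva he.symm)]
        rw [ih hv']
        constructor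
        · rintro (rfl | hm); · exact absurd rfl hva
          · omega
        · intro hlt; right; omega

instance splitFintype (G : SimpleGraph V) : Fintype {p : V × V // G.Adj p.1 p.2} :=
  Subtype.fintype _

/-- left endpoint of the interval of a split vertex in the constructed decomposition -/
def sgl (G : SimpleGraph V) (L : List V) (x : {p : V × V // G.Adj p.1 p.2}) : ℕ :=
  if L.idxOf x.val.1 < L.idxOf x.val.2 then 2 * L.idxOf x.val.1 + 1
  else 2 * L.idxOf x.val.2 + 2

/-- right endpoint -/
def sgr (G : SimpleGraph V) (L : List V) (x : {p : V × V // G.Adj p.1 p.2}) : ℕ :=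
  if L.idxOf x.val.1 < L.idxOf x.val.2 then 2 * L.idxOf x.val.2
  else 2 * L.idxOf x.val.1 + 1

def sgBag (G : SimpleGraph V) (L : List V) (t : ℕ) : Finset {p : V × V // G.Adj p.1 p.2} :=
  Finset.univ.filter (fun x => sgl G L x ≤ t ∧ t ≤ sgr G L x)

lemma cutSize_take_le (G : SimpleGraph V) (L : List V) (s : ℕ) :
    cutSizeSG G ((L.take s).toFinset) ≤ cwVal G L := by
  by_cases hs : s ≤ L.length
  · exact Finset.le_sup (f := fun i => cutSizeSG G (L.take i).toFinset)
      (Finset.mem_range.mpr (by omega))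
  · have h1 : L.take s = L := List.take_of_length_le (by omega)
    have h2 := Finset.le_sup (f := fun i => cutSizeSG G (L.take i).toFinset)
      (Finset.mem_range.mpr (show L.length < L.length + 1 by omega))
    rw [h1]
    have h3 := h2; simp at h3; exact h3

lemma exists_decomp (G : SimpleGraph V) (L : List V) (hnd : L.Nodup) (hall : ∀ v, v ∈ L) :
    ∃ m B, IsPathDecomp (splitGraph G) m B ∧ ∀ t, (B t).card ≤ 2 * cwVal G L := by
  have hlt : ∀ v : V, L.idxOf v < L.length := fun v => List.idxOf_lt_length_iff.mpr (hall v)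
  have hinj : ∀ a b : V, L.idxOf a = L.idxOf b → a = b := fun a b hab =>
    (List.idxOf_inj (hall a)).mp hab
  have hne : ∀ x : {p : V × V // G.Adj p.1 p.2}, L.idxOf x.val.1 ≠ L.idxOf x.val.2 :=
    fun x he => (G.ne_of_adj x.2) (hinj _ _ he)
  refine ⟨2 * L.length, sgBag G L, ⟨?_, ?_⟩, ?_⟩
  · -- edges covered
    rintro x y hxy
    rw [splitGraph, SimpleGraph.fromRel_adj] at hxy
    obtain ⟨hnexy, hrel⟩ := hxy
    have hx := hne x
    have hy := hne y
    have hxl1 := hlt x.val.1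
    have hxl2 := hlt x.val.2
    have hyl1 := hlt y.val.1
    have hyl2 := hlt y.val.2
    rcases hrel with (⟨h1, h2⟩ | h1) | (⟨h1, h2⟩ | h1)
    · -- y = reverse of x
      have e1 : L.idxOf x.val.1 = L.idxOf y.val.2 := by rw [h1]
      have e2 : L.idxOf x.val.2 = L.idxOf y.val.1 := by rw [h2]
      refine ⟨2 * min (L.idxOf x.val.1) (L.idxOf x.val.2) + 2, by omega, ?_, ?_⟩ <;>
      · simp only [sgBag, Finset.mem_filter, Finset.mem_univ, true_and]; simp only [sgl, sgr]
        split_ifs <;> omega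
    · -- same head
      have e1 : L.idxOf x.val.1 = L.idxOf y.val.1 := by rw [h1]
      refine ⟨2 * L.idxOf x.val.1 + 1, by omega, ?_, ?_⟩ <;>
      · simp only [sgBag, Finset.mem_filter, Finset.mem_univ, true_and]; simp only [sgl, sgr]
        split_ifs <;> omega
    · -- x = reverse of y
      have e1 : L.idxOf y.val.1 = L.idxOf x.val.2 := by rw [h1]
      have e2 : L.idxOf y.val.2 = L.idxOf x.val.1 := by rw [h2]
      refine ⟨2 * min (L.idxOf x.val.1) (L.idxOf x.val.2) + 2, by omega, ?_, ?_⟩ <;>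
      · simp only [sgBag, Finset.mem_filter, Finset.mem_univ, true_and]; simp only [sgl, sgr]
        split_ifs <;> omega
    · -- same head (other direction)
      have e1 : L.idxOf y.val.1 = L.idxOf x.val.1 := by rw [h1]
      refine ⟨2 * L.idxOf x.val.1 + 1, by omega, ?_, ?_⟩ <;>
      · simp only [sgBag, Finset.mem_filter, Finset.mem_univ, true_and]; simp only [sgl, sgr]
        split_ifs <;> omega
  · -- intervals
    intro x
    have hx := hne x
    have hxl1 := hlt x.val.1
    have hxl2 := hlt x.val.2
    refine ⟨sgl G L x, sgr G L x, ?_, ?_, fun t => ?_⟩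
    · simp only [sgl, sgr]; split_ifs <;> omega
    · simp only [sgr]; split_ifs <;> omega
    · simp [sgBag, Finset.mem_filter]
  · -- card bound
    intro t
    have hsplit := Finset.card_filter_add_card_filter_not
      (s := sgBag G L t) (fun x => L.idxOf x.val.1 < L.idxOf x.val.2)
    have hle1 : ((sgBag G L t).filter
        (fun x => L.idxOf x.val.1 < L.idxOf x.val.2)).card
        ≤ cutSizeSG G ((L.take ((t+1)/2)).toFinset) := by
      refine Finset.card_le_card_of_injOn (fun x => x.val) ?_ ?_
      · intro x hx
        simp only [Finset.mem_coe, Finset.mem_filter, sgBag, Finset.mem_univ, true_and] at hx; simp only [sgl, sgr] at hx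
        obtain ⟨⟨hl, hr⟩, hor⟩ := hx
        rw [if_pos hor] at hl
        rw [if_pos hor] at hr
        simp only [cutSizeSG, Finset.mem_coe, Finset.mem_filter, Finset.mem_univ, true_and]
        refine ⟨x.2, ?_, ?_⟩
        · rw [List.mem_toFinset, mem_take_iff_indexOf L _ (hall _)]; omega
        · rw [List.mem_toFinset, mem_take_iff_indexOf L _ (hall _)]; omega
      · exact fun a _ b _ hab => Subtype.ext hab
    have hle2 : ((sgBag G L t).filter
        (fun x => ¬ L.idxOf x.val.1 < L.idxOf x.val.2)).card
        ≤ cutSizeSG G ((L.take (t/2)).toFinset) := by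
      refine Finset.card_le_card_of_injOn (fun x => x.val.swap) ?_ ?_
      · intro x hx
        simp only [Finset.mem_coe, Finset.mem_filter, sgBag, Finset.mem_univ, true_and] at hx; simp only [sgl, sgr] at hx
        obtain ⟨⟨hl, hr⟩, hor⟩ := hx
        rw [if_neg hor] at hl
        rw [if_neg hor] at hr
        have hx2 := hne x
        simp only [cutSizeSG, Finset.mem_coe, Finset.mem_filter, Finset.mem_univ, true_and, Prod.fst_swap,
          Prod.snd_swap]
        refine ⟨G.adj_symm x.2, ?_, ?_⟩
        · rw [List.mem_toFinset, mem_take_iff_indexOf L _ (hall _)]; omega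
        · rw [List.mem_toFinset, mem_take_iff_indexOf L _ (hall _)]; omega
      · intro a _ b _ hab
        exact Subtype.ext (Prod.swap_injective hab)
    have hc1 := cutSize_take_le G L ((t+1)/2)
    have hc2 := cutSize_take_le G L (t/2)
    omega

abbrev SV (G : SimpleGraph V) := {p : V × V // G.Adj p.1 p.2}

lemma cutwidth_le_of_decomp (G : SimpleGraph V) (h : ∃ u v, G.Adj u v)
    {w m : ℕ} {B : ℕ → Finset {p : V × V // G.Adj p.1 p.2}}
    (hdec : IsPathDecomp (splitGraph G) m B) (hcard : ∀ t, (B t).card ≤ w + 1) :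
    cutwidthSG G ≤ w := by
  classical
  obtain ⟨u0, v0, h0⟩ := h
  have hXne : Nonempty (SV G) := ⟨⟨(u0, v0), h0⟩⟩
  obtain ⟨hcov, hint⟩ := hdec
  choose ix jx hij hjm hmem using hint
  set N := Fintype.card (SV G) with hN
  have hNpos : 0 < N := Fintype.card_pos
  set eV := (Fintype.equivFin (SV G))
  set key : SV G → ℕ := fun x => ix x * N + (eV x).val with hkey
  have hkeylt : ∀ x, (eV x).val < N := fun x => (eV x).isLt
  have keydef : ∀ x : SV G, key x = ix x * N + (eV x).val := fun x => rfl
  have keymono : ∀ x y : SV G, key x ≤ key y → ix x ≤ ix y := by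
    intro x y hxy
    by_contra hc
    push_neg at hc
    have h0 : (ix y + 1) * N ≤ ix x * N := Nat.mul_le_mul_right N (by omega)
    have h2 : (ix y + 1) * N = ix y * N + N := by ring
    have h3 := hkeylt x
    have h4 := hkeylt y
    rw [keydef, keydef] at hxy
    omega
  have keyinj : ∀ x y : SV G, key x = key y → x = y := by
    intro x y hxy
    have h1 : ix x ≤ ix y := keymono _ _ hxy.le
    have h2 : ix y ≤ ix x := keymono _ _ hxy.ge
    have h3 : ix x = ix y := le_antisymm h1 h2
    have h4 : (eV x).val = (eV y).val := by
      simp only [hkey, h3] at hxy; omega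
    exact eV.injective (Fin.ext h4)
  -- incidence sets
  set Inc : V → Finset (SV G) := fun v => Finset.univ.filter (fun x : SV G => x.val.1 = v) with hInc
  set M := Finset.univ.sup ix with hM
  set BIG := (M + 1) * N with hBIG
  have hkeyBIG : ∀ x : SV G, key x < BIG := by
    intro x
    have h1 : ix x ≤ M := Finset.le_sup (Finset.mem_univ x)
    have h2 : ix x * N ≤ M * N := Nat.mul_le_mul_right N h1
    have h3 := hkeylt x
    have h4 : BIG = M * N + N := by rw [hBIG]; ring
    rw [keydef]
    omega
  set P : V → ℕ := fun v => if (Inc v).Nonempty then (Inc v).sup key else BIG with hP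
  have hPattain : ∀ v : V, (Inc v).Nonempty → ∃ x ∈ Inc v, P v = key x := by
    intro v hv
    obtain ⟨x, hx1, hx2⟩ := Finset.exists_mem_eq_sup (Inc v) hv key
    exact ⟨x, hx1, by simp only [hP, if_pos hv]; exact hx2⟩
  have hPlt : ∀ v : V, (Inc v).Nonempty → P v < BIG := by
    intro v hv
    obtain ⟨x, _, hx2⟩ := hPattain v hv
    rw [hx2]; exact hkeyBIG x
  have hPinj : ∀ u v : V, (Inc u).Nonempty → (Inc v).Nonempty → P u = P v → u = v := by
    intro u v hu hv huv
    obtain ⟨x, hx1, hx2⟩ := hPattain u hu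
    obtain ⟨y, hy1, hy2⟩ := hPattain v hv
    have : x = y := keyinj _ _ (by omega)
    have hxu : x.val.1 = u := by simpa [hInc] using hx1
    have hyv : y.val.1 = v := by simpa [hInc] using hy1
    rw [← hxu, ← hyv, this]
  -- sorted list of vertices
  haveI : IsTotal V (fun a b => P a ≤ P b) := ⟨fun a b => le_total _ _⟩
  haveI : IsTrans V (fun a b => P a ≤ P b) := ⟨fun a b c h1 h2 => le_trans h1 h2⟩
  set L := List.insertionSort (fun a b => P a ≤ P b) Finset.univ.toList with hL
  have hperm : List.Perm L Finset.univ.toList := List.perm_insertionSort _ _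
  have hnd : L.Nodup := hperm.symm.nodup (Finset.nodup_toList _)
  have hallL : ∀ v : V, v ∈ L := fun v => hperm.mem_iff.mpr (by simp)
  have hsorted : List.Pairwise (fun a b => P a ≤ P b) L := List.pairwise_insertionSort _ _
  -- main bound
  have hcw : cwVal G L ≤ w := by
    refine Finset.sup_le ?_
    intro s _
    set S := (L.take s).toFinset with hS
    set C := Finset.univ.filter (fun p : V × V => G.Adj p.1 p.2 ∧ p.1 ∈ S ∧ p.2 ∉ S) with hC
    show C.card ≤ w
    by_cases hCne : C.Nonempty
    swap
    · rw [Finset.not_nonempty_iff_eq_empty] at hCne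
      simp [hCne]
    -- prefix/suffix comparison
    have hcomp : ∀ u ∈ S, ∀ v : V, v ∉ S → P u ≤ P v := by
      intro u hu v hv
      have hu' : u ∈ L.take s := List.mem_toFinset.mp hu
      have hv' : v ∈ L.drop s := by
        have : v ∈ L := hallL v
        rw [← List.take_append_drop s L] at this
        rcases List.mem_append.mp this with h1 | h1
        · exact absurd (List.mem_toFinset.mpr h1) hv
        · exact h1
      have hp : List.Pairwise (fun a b => P a ≤ P b) (L.take s ++ L.drop s) := by
        rw [List.take_append_drop]; exact hsorted
      exact (List.pairwise_append.mp hp).2.2 u hu' v hv'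
    obtain ⟨p0, hp0⟩ := hCne
    have hp0' := hp0
    simp only [hC, Finset.mem_filter, Finset.mem_univ, true_and] at hp0'
    have hSne : S.Nonempty := ⟨p0.1, hp0'.2.1⟩
    set κ := S.sup P with hκ
    obtain ⟨uστ, huσ1, huσ2⟩ := Finset.exists_mem_eq_sup S hSne P
    -- facts about cut pairs
    have hcut : ∀ p : V × V, p ∈ C → (Inc p.1).Nonempty ∧ (Inc p.2).Nonempty ∧ κ < P p.2 := by
      intro p hp
      simp only [hC, Finset.mem_filter, Finset.mem_univ, true_and] at hp
      obtain ⟨hadj, hp1, hp2⟩ := hp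
      have hi1 : (Inc p.1).Nonempty := ⟨⟨p, hadj⟩, by simp [hInc]⟩
      have hi2 : (Inc p.2).Nonempty := ⟨⟨(p.2, p.1), G.adj_symm hadj⟩, by simp [hInc]⟩
      refine ⟨hi1, hi2, ?_⟩
      have hle : κ ≤ P p.2 := by
        rw [hκ]
        exact Finset.sup_le (fun u hu => hcomp u hu p.2 hp2)
      rcases lt_or_eq_of_le hle with hlt | heq
      · exact hlt
      · exfalso
        have heq2 : P uστ = P p.2 := by rw [← huσ2]; exact heq
        have hu0ne : (Inc uστ).Nonempty := by
          by_contra hemp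
          have hbig : P uστ = BIG := by simp [hP, hemp]
          have h1 : P p.2 < BIG := hPlt _ hi2
          omega
        have : uστ = p.2 := hPinj _ _ hu0ne hi2 heq2
        rw [this] at huσ1
        exact hp2 huσ1
    -- the pivot split vertex y
    have hY0ne : ∃ x : SV G, κ < key x := by
      obtain ⟨hi1, hi2, hlt⟩ := hcut p0 hp0
      obtain ⟨x, hx1, hx2⟩ := hPattain p0.2 hi2
      exact ⟨x, by rw [← hx2]; exact hlt⟩
    set Y0 := Finset.univ.filter (fun x : SV G => κ < key x) with hY0
    have hY0ne' : Y0.Nonempty := by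
      obtain ⟨x, hx⟩ := hY0ne
      exact ⟨x, by simp [hY0, hx]⟩
    obtain ⟨y, hy1, hy2⟩ := Finset.exists_min_image Y0 key hY0ne'
    have hyκ : κ < key y := by simpa [hY0] using hy1
    set c := ix y with hc
    have hyB : y ∈ B c := (hmem y c).mpr ⟨le_refl _, hij y⟩
    -- the injection
    have hkey2 : C.card ≤ ((B c).erase y).card := by
      refine Finset.card_le_card_of_injOn
        (fun p => if hadj : G.Adj p.1 p.2 then
          (if key (⟨(p.2, p.1), G.adj_symm hadj⟩ : SV G) ≤ κ then (⟨(p.2, p.1), G.adj_symm hadj⟩ : SV G)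
           else (⟨p, hadj⟩ : SV G))
          else Classical.choice hXne) ?_ ?_
      · -- maps into bag minus pivot
        intro p hp
        have hp' := hp
        simp only [hC, Finset.mem_coe, Finset.mem_filter, Finset.mem_univ, true_and] at hp'
        obtain ⟨hadj, hp1, hp2⟩ := hp'
        obtain ⟨hi1, hi2, hκlt⟩ := hcut p hp
        simp only [dif_pos hadj]
        -- generic step: z ≤ κ adjacent to x' > κ implies z in bag minus pivot
        have main : ∀ z x' : SV G, key z ≤ κ → κ < key x' → (splitGraph G).Adj z x' →
            z ∈ (B c).erase y := by
          intro z x' hzκ hx'κ hadjzx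
          obtain ⟨t0, ht0m, hzt0, hxt0⟩ := hcov z x' hadjzx
          have hz1 := (hmem z t0).mp hzt0
          have hx1 := (hmem x' t0).mp hxt0
          have hx'Y : x' ∈ Y0 := by simp [hY0, hx'κ]
          have h1 : c ≤ ix x' := keymono _ _ (hy2 x' hx'Y)
          have h2 : ix z ≤ c := keymono _ _ (by omega)
          have hzB : z ∈ B c := (hmem z c).mpr ⟨h2, by omega⟩
          refine Finset.mem_erase.mpr ⟨?_, hzB⟩
          intro hzy
          rw [hzy] at hzκ
          omega
        by_cases hrev : key (⟨(p.2, p.1), G.adj_symm hadj⟩ : SV G) ≤ κ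
        · rw [if_pos hrev]
          obtain ⟨mx, hmx1, hmx2⟩ := hPattain p.2 hi2
          have hmxκ : κ < key mx := by rw [← hmx2]; exact hκlt
          refine main _ mx hrev hmxκ ?_
          rw [splitGraph, SimpleGraph.fromRel_adj]
          have hmxv : mx.val.1 = p.2 := by simpa [hInc] using hmx1
          refine ⟨?_, Or.inl (Or.inr ?_)⟩
          · intro hEq
            rw [hEq] at hrev
            omega
          · simpa using hmxv.symm
        · rw [if_neg hrev]
          push_neg at hrev
          have hq1 : key (⟨p, hadj⟩ : SV G) ≤ κ := by
            have h1 : key (⟨p, hadj⟩ : SV G) ≤ P p.1 := by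
              have hm : (⟨p, hadj⟩ : SV G) ∈ Inc p.1 := by simp [hInc]
              simp only [hP, if_pos hi1]
              exact Finset.le_sup hm
            have h2 : P p.1 ≤ κ := by rw [hκ]; exact Finset.le_sup hp1
            omega
          refine main _ (⟨(p.2, p.1), G.adj_symm hadj⟩ : SV G) hq1 hrev ?_
          rw [splitGraph, SimpleGraph.fromRel_adj]
          refine ⟨?_, Or.inl (Or.inl ⟨rfl, rfl⟩)⟩
          · intro hEq
            have : p.1 = p.2 := by
              have := congrArg (fun z : SV G => z.val.1) hEq
              simpa using this
            exact (G.ne_of_adj hadj) this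
      · -- injectivity
        intro p hp q hq hpq
        have hp' := hp; have hq' := hq
        simp only [hC, Finset.mem_coe, Finset.mem_filter, Finset.mem_univ, true_and] at hp' hq'
        obtain ⟨hadjp, hp1, hp2⟩ := hp'
        obtain ⟨hadjq, hq1, hq2⟩ := hq'
        simp only [dif_pos hadjp, dif_pos hadjq] at hpq
        by_cases h1 : key (⟨(p.2, p.1), G.adj_symm hadjp⟩ : SV G) ≤ κ <;>
          by_cases h2 : key (⟨(q.2, q.1), G.adj_symm hadjq⟩ : SV G) ≤ κ
        · rw [if_pos h1, if_pos h2] at hpq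
          have := congrArg Subtype.val hpq
          simp only at this
          exact Prod.ext (congrArg Prod.snd this) (congrArg Prod.fst this)
        · rw [if_pos h1, if_neg h2] at hpq
          have := congrArg (fun z : SV G => z.val.1) hpq
          simp only at this
          exact absurd (this ▸ hq1) hp2
        · rw [if_neg h1, if_pos h2] at hpq
          have := congrArg (fun z : SV G => z.val.1) hpq
          simp only at this
          exact absurd (this ▸ hp1) hq2
        · rw [if_neg h1, if_neg h2] at hpq
          exact congrArg Subtype.val hpq
    have hbc : (B c).card ≤ w + 1 := hcard c
    have herase : ((B c).erase y).card = (B c).card - 1 := Finset.card_erase_of_mem hyB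
    have hpos : 1 ≤ (B c).card := Finset.card_pos.mpr ⟨y, hyB⟩
    omega
  have hmemset : cwVal G L ∈ {n | ∃ L' : List V, L'.Nodup ∧ (∀ v, v ∈ L') ∧ cwVal G L' = n} :=
    ⟨L, hnd, hallL, rfl⟩
  exact le_trans (Nat.sInf_le hmemset) hcw

/-- For every graph `G` with at least one edge,
`cutwidth(G) ≤ pathwidth(G') ≤ 2 · cutwidth(G)`. -/
theorem cutwidth_le_pathwidth_split_le_two_mul (G : SimpleGraph V)
    (h : ∃ u v, G.Adj u v) :
    cutwidthSG G ≤ pathwidth (splitGraph G) ∧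
      pathwidth (splitGraph G) ≤ 2 * cutwidthSG G := by
  classical
  have hnd0 : (Finset.univ.toList (α := V)).Nodup := Finset.nodup_toList _
  have hall0 : ∀ v : V, v ∈ Finset.univ.toList := fun v => by simp
  obtain ⟨m0, B0, hdec0, hcard0⟩ := exists_decomp G Finset.univ.toList hnd0 hall0
  have hpwne : {w | ∃ m B, IsPathDecomp (splitGraph G) m B ∧
      ∀ t, (B t).card ≤ w + 1}.Nonempty :=
    ⟨2 * cwVal G Finset.univ.toList, m0, B0, hdec0, fun t => le_trans (hcard0 t) (by omega)⟩
  obtain ⟨m1, B1, hdec1, hcard1⟩ := Nat.sInf_mem hpwne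
  constructor
  · exact cutwidth_le_of_decomp G h hdec1 hcard1
  · have hcwne : {n | ∃ L : List V, L.Nodup ∧ (∀ v, v ∈ L) ∧ cwVal G L = n}.Nonempty :=
      ⟨cwVal G Finset.univ.toList, Finset.univ.toList, hnd0, hall0, rfl⟩
    obtain ⟨L, hndL, hallL, hLval⟩ := Nat.sInf_mem hcwne
    obtain ⟨m2, B2, hdec2, hcard2⟩ := exists_decomp G L hndL hallL
    have hle : pathwidth (splitGraph G) ≤ 2 * cwVal G L :=
      Nat.sInf_le ⟨m2, B2, hdec2, fun t => le_trans (hcard2 t) (by omega)⟩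
    rw [hLval] at hle
    exact hle
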